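/- arXiv:1310.6727 — 2 statements merged into one kernel-verified Lean document; each statement's English description precedes it below -/
import Mathlib

section
/- Let K be a number field with ring of integers O_K and let D_K be the absolute value of the discriminant of K over ℚ. Then every ideal class of O_K contains a nonzero integral ideal 𝔟 ⊆ O_K such that every prime ideal 𝔭 of O_K dividing 𝔟 has residue field of cardinality at most √D_K. -/
open scoped NNReal
open IsDedekindDomain NumberField Polynomial

namespace Effective

noncomputable section

variable {K : Type*} [Field K] [NumberField K]

/-- The cardinality `N(v)` of the residue field at a finite place `v`. -/
def placeNorm (v : HeightOneSpectrum (𝓞 K)) : ℕ := Ideal.absNorm v.asIdeal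

lemma placeNorm_ne_zero (v : HeightOneSpectrum (𝓞 K)) : (placeNorm v : ℝ≥0) ≠ 0 := by
  have h : Fintype (𝓞 K ⧸ v.asIdeal) := @Fintype.ofFinite _ (Ideal.finiteQuotientOfFreeOfNeBot v.asIdeal v.ne_bot)
  have : Finite (𝓞 K ⧸ v.asIdeal) := Finite.of_fintype _
  simpa [placeNorm] using (Ideal.absNorm_ne_zero_iff v.asIdeal).mpr this

/-- The residue characteristic of a finite place. -/
def resChar (v : HeightOneSpectrum (𝓞 K)) : ℕ := ringChar (𝓞 K ⧸ v.asIdeal)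

/-- The normalized `v`-adic absolute value `|x|_v = N(v)^{-ord_v x}`. -/
def vAbs (v : HeightOneSpectrum (𝓞 K)) (x : K) : ℝ :=
  WithZeroMulInt.toNNReal (placeNorm_ne_zero v) (v.valuation K x)

/-- The absolute multiplicative Weil height of a point `(x 0, …, x (m-1)) ∈ Kᵐ`. -/
def mulHeight {m : ℕ} (x : Fin m → K) : ℝ :=
  ((∏ w : InfinitePlace K, (⨆ i, w (x i)) ^ w.mult) *
      ∏ᶠ v : HeightOneSpectrum (𝓞 K), ⨆ i, vAbs v (x i)) ^
    ((Module.finrank ℚ K : ℝ)⁻¹)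

/-- The absolute logarithmic Weil height of a point of `Kᵐ`. -/
def logHeight {m : ℕ} (x : Fin m → K) : ℝ := Real.log (mulHeight x)

/-- The absolute logarithmic Weil height of `α ∈ K`. -/
def logHeight₁ (α : K) : ℝ := logHeight ![1, α]

/-- The absolute multiplicative Weil height of `α ∈ K`. -/
def mulHeight₁ (α : K) : ℝ := mulHeight ![1, α]

/-- The absolute logarithmic Weil height of a polynomial, i.e. of the point
`(1, c₀, …, c_n)` formed by `1` and its coefficients. -/
def polyLogHeight (f : K[X]) : ℝ :=
  logHeight (Fin.cons 1 fun i : Fin (f.natDegree + 1) => f.coeff i)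

/-- The Sylvester matrix of two polynomials `p`, `q` with formal degrees `m`, `l`. -/
def sylvester (m l : ℕ) (p q : K[X]) : Matrix (Fin (l + m)) (Fin (l + m)) K :=
  Matrix.of fun i j =>
    if (i : ℕ) < l then
      (if (i : ℕ) ≤ (j : ℕ) ∧ (j : ℕ) ≤ (i : ℕ) + m then p.coeff (m + i - j) else 0)
    else
      (if (i : ℕ) - l ≤ (j : ℕ) ∧ (j : ℕ) ≤ ((i : ℕ) - l) + l then
        q.coeff (l + ((i : ℕ) - l) - j) else 0)

/-- The discriminant of a polynomial over a field (of characteristic zero), defined by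
`Δ(f) = (-1)^(n(n-1)/2) lc(f)⁻¹ Res(f, f')`. -/
def polyDisc (f : K[X]) : K :=
  (-1 : K) ^ (f.natDegree * (f.natDegree - 1) / 2) * f.leadingCoeff⁻¹ *
    (sylvester f.natDegree (f.natDegree - 1) f (derivative f)).det

/-- The binary form `Σ_{i=0}^n β_i X^{n-i} Y^i` of degree `n` with coefficients `β`. -/
def binForm (n : ℕ) (β : Fin (n + 1) → K) : MvPolynomial (Fin 2) K :=
  ∑ i : Fin (n + 1),
    MvPolynomial.C (β i) * MvPolynomial.X 0 ^ (n - (i : ℕ)) * MvPolynomial.X 1 ^ (i : ℕ)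

/-- The `i`-th coefficient `β_i` (coefficient of `X^{n-i} Y^i`) of a binary form of degree `n`. -/
def bfCoeff (n : ℕ) (G : MvPolynomial (Fin 2) K) (i : Fin (n + 1)) : K :=
  MvPolynomial.coeff (Finsupp.single 0 (n - (i : ℕ)) + Finsupp.single 1 (i : ℕ)) G

/-- The pullback `ψ*G (X,Y) = G(αX + βY, γX + δY)` of a binary form by a matrix
`ψ = (α β; γ δ)`. -/
def pullback (ψ : Matrix (Fin 2) (Fin 2) K) (G : MvPolynomial (Fin 2) K) :
    MvPolynomial (Fin 2) K :=
  MvPolynomial.bind₁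
    (fun j : Fin 2 => MvPolynomial.C (ψ j 0) * MvPolynomial.X 0 +
      MvPolynomial.C (ψ j 1) * MvPolynomial.X 1) G

open scoped Classical in
/-- The discriminant of the binary form with coefficient vector `β`; writing the form as
`Y^k · (homogenization of g)` with `g(X) = G(X,1)`, it is `Δ(g)` if `k = 0`, it is
`lc(g)² Δ(g)` if `k = 1`, and it is `0` if `k ≥ 2`. -/
def discBF (n : ℕ) (β : Fin (n + 1) → K) : K :=
  let g : K[X] := ∑ i : Fin (n + 1), Polynomial.C (β i) * Polynomial.X ^ (n - (i : ℕ))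
  if g.natDegree = n then polyDisc g
  else if g ≠ 0 ∧ g.natDegree = n - 1 then g.leadingCoeff ^ 2 * polyDisc g
  else 0

/-- The absolute logarithmic Weil height of a binary form of degree `n`, i.e. the height of
the point `(1, β₀, …, β_n)`. -/
def bfLogHeight (n : ℕ) (G : MvPolynomial (Fin 2) K) : ℝ :=
  logHeight (Fin.cons 1 (bfCoeff n G))

/-- The absolute multiplicative Weil height of a binary form of degree `n`. -/
def bfMulHeight (n : ℕ) (G : MvPolynomial (Fin 2) K) : ℝ :=
  mulHeight (Fin.cons 1 (bfCoeff n G))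

/-- The ring of `T`-integers of `K`, for a finite set `T` of finite places of `K`. -/
def SInt (T : Finset (HeightOneSpectrum (𝓞 K))) : Subalgebra (𝓞 K) K :=
  Set.integer (T : Set (HeightOneSpectrum (𝓞 K))) K

/-- `x ∈ K` is a unit of the ring of `T`-integers `O_T`. -/
def IsSUnit (T : Finset (HeightOneSpectrum (𝓞 K))) (x : K) : Prop :=
  x ∈ SInt T ∧ ∃ y ∈ SInt T, x * y = 1

/-- The class number `h_T` of the ring of `T`-integers. -/
def classNum (T : Finset (HeightOneSpectrum (𝓞 K))) : ℕ :=
  Nat.card (ClassGroup (SInt T))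

/-- `λ_T = log₂ h_T`. -/
def lam (T : Finset (HeightOneSpectrum (𝓞 K))) : ℝ := Real.logb 2 (classNum T)

/-- `N_T`, the product of the residue field cardinalities of the finite places in `T`. -/
def normProd (T : Finset (HeightOneSpectrum (𝓞 K))) : ℕ := ∏ v ∈ T, placeNorm v

/-- `n_T`, the product of the logarithms of the residue field cardinalities of the finite
places in `T`. -/
def logProd (T : Finset (HeightOneSpectrum (𝓞 K))) : ℝ := ∏ v ∈ T, Real.log (placeNorm v)

/-- The maximum of the residue characteristics of the finite places in `T`
(an empty maximum being `1`). -/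
def maxResChar (T : Finset (HeightOneSpectrum (𝓞 K))) : ℕ := max 1 (T.sup resChar)

variable (K) in
/-- The absolute value of the discriminant of `K` over `ℚ`. -/
def absDiscr : ℕ := (NumberField.discr K).natAbs

/-- A Weierstrass curve over `K` has good reduction at a finite place `v` if some
change of variables makes all its coefficients `v`-integral and its discriminant a `v`-unit. -/
def GoodReductionAt (W : WeierstrassCurve K) (v : HeightOneSpectrum (𝓞 K)) : Prop :=
  ∃ C : WeierstrassCurve.VariableChange K,
    v.valuation K (C • W).a₁ ≤ 1 ∧ v.valuation K (C • W).a₂ ≤ 1 ∧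
    v.valuation K (C • W).a₃ ≤ 1 ∧ v.valuation K (C • W).a₄ ≤ 1 ∧
    v.valuation K (C • W).a₆ ≤ 1 ∧ v.valuation K (C • W).Δ = 1

/-- Good reduction outside a finite set `S` of finite places. -/
def GoodReductionOutside (W : WeierstrassCurve K) (S : Finset (HeightOneSpectrum (𝓞 K))) :
    Prop :=
  ∀ v : HeightOneSpectrum (𝓞 K), v ∉ S → GoodReductionAt W v

/-- Two Weierstrass curves over `K` are `K`-isomorphic if they are related by an admissible
change of variables. -/
def WIso (W W' : WeierstrassCurve K) : Prop :=
  ∃ C : WeierstrassCurve.VariableChange K, C • W = W'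

/-- The Weierstrass curve `Y² = f(X)` attached to a cubic polynomial `f`. -/
def curveOf (f : K[X]) : WeierstrassCurve K :=
  ⟨0, f.coeff 2, 0, f.coeff 1, f.coeff 0⟩

/-- The group of `T`-units of `Kˣ`. -/
def SUnitGroup (T : Finset (HeightOneSpectrum (𝓞 K))) : Subgroup Kˣ :=
  Set.unit (T : Set (HeightOneSpectrum (𝓞 K))) K

/-- `x ∈ Kˣ` is a torsion element. -/
def IsTorsionUnit (x : Kˣ) : Prop := ∃ n : ℕ, n ≠ 0 ∧ x ^ n = 1

/-- The family `ε` consists of `T`-units and generates the group of `T`-units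
modulo its torsion subgroup. -/
def GeneratesModTorsion (T : Finset (HeightOneSpectrum (𝓞 K))) {r : ℕ}
    (ε : Fin r → Kˣ) : Prop :=
  (∀ i, ε i ∈ SUnitGroup T) ∧
    ∀ x ∈ SUnitGroup T, ∃ (t : Kˣ) (k : Fin r → ℤ),
      t ∈ SUnitGroup T ∧ IsTorsionUnit t ∧ x = t * ∏ i, ε i ^ k i

/-- `ζ` is a generator of the torsion subgroup of the group of `T`-units. -/
def GeneratesTorsion (T : Finset (HeightOneSpectrum (𝓞 K))) (ζ : Kˣ) : Prop :=
  ζ ∈ SUnitGroup T ∧ IsTorsionUnit ζ ∧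
    ∀ x ∈ SUnitGroup T, IsTorsionUnit x → x ∈ Subgroup.zpowers ζ

end

end Effective

open scoped nonZeroDivisors

section MinkAux
open Real NumberField NumberField.InfinitePlace Module

lemma MinkAux.aux_key (n : ℕ) (hn : 2 ≤ n) :
    (4 / π) ^ n * ((n.factorial : ℝ)) ^ 2 ≤ (n : ℝ) ^ (2 * n) := by
  induction n, hn using Nat.le_induction with
  | base =>
      have hπ : (3 : ℝ) ≤ π := Real.pi_gt_three.le
      have hπ0 : (0:ℝ) < π := by linarith
      have h2 : (4 / π : ℝ) ≤ 2 := by rw [div_le_iff₀ hπ0]; linarith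
      have h2' : (4/π:ℝ)^2 ≤ 2^2 := by
        apply pow_le_pow_left₀ (by positivity) h2
      rw [show (2:ℕ).factorial = 2 by decide]
      push_cast
      nlinarith
  | succ m hm ih =>
      have hm0 : (0:ℝ) < m := by exact_mod_cast (by omega : 0 < m)
      have hπ : (3 : ℝ) ≤ π := Real.pi_gt_three.le
      have hπ0 : (0:ℝ) < π := by linarith
      have hmm : (2:ℝ)*m/m = 2 := by field_simp
      have h3 : (3 : ℝ) ≤ (1 + 1 / m) ^ (2 * m) := by
        have hneg : (-2:ℝ) ≤ 1/m := by
          have h0 : (0:ℝ) ≤ 1/m := by positivity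
          linarith
        have h := one_add_mul_le_pow (a := (1:ℝ)/m) hneg (2*m)
        have : (1:ℝ) + (2*m : ℕ) * (1/m) = 3 := by
          push_cast; rw [mul_one_div]; rw [hmm]; norm_num
        linarith [this ▸ h]
      have hkey : (4 / π) * (m:ℝ) ^ (2*m) ≤ ((m:ℝ)+1) ^ (2*m) := by
        have h4π : (4/π : ℝ) ≤ 3 := by rw [div_le_iff₀ hπ0]; linarith
        have heq : (1 + 1/m : ℝ) ^ (2*m) * (m:ℝ)^(2*m) = ((m:ℝ)+1)^(2*m) := by
          rw [← mul_pow]; congr 1; field_simp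
        calc (4/π) * (m:ℝ)^(2*m) ≤ (1 + 1/m)^(2*m) * (m:ℝ)^(2*m) := by
              gcongr; linarith
          _ = _ := heq
      have hfc : ((m+1).factorial : ℝ) = ((m:ℝ)+1) * m.factorial := by
        rw [Nat.factorial_succ]; push_cast; ring
      have : (4/π)^(m+1) * ((m+1).factorial : ℝ)^2
          ≤ ((m:ℝ)+1)^(2*(m+1)) := by
        calc (4/π)^(m+1) * ((m+1).factorial : ℝ)^2
            = ((m:ℝ)+1)^2 * ((4/π) * ((4/π)^m * (m.factorial:ℝ)^2)) := by
              rw [hfc, pow_succ]; ring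
          _ ≤ ((m:ℝ)+1)^2 * ((4/π) * (m:ℝ)^(2*m)) := by gcongr
          _ ≤ ((m:ℝ)+1)^2 * ((m:ℝ)+1)^(2*m) := by gcongr
          _ = ((m:ℝ)+1)^(2*(m+1)) := by rw [← pow_add]; ring_nf
      calc (4/π)^(m+1) * ((m+1).factorial : ℝ)^2 ≤ ((m:ℝ)+1)^(2*(m+1)) := this
        _ = (((m+1:ℕ)) : ℝ)^(2*(m+1)) := by norm_cast


lemma MinkAux.aux_const (n s : ℕ) (hn : 1 ≤ n) (hs : 2 * s ≤ n) :
    (4 / π) ^ s * ((n.factorial : ℝ) / (n : ℝ) ^ n) ≤ 1 := by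
  have hπ : (3 : ℝ) ≤ π := Real.pi_gt_three.le
  have hπ0 : (0:ℝ) < π := by linarith
  have h1 : (1:ℝ) ≤ 4/π := by rw [le_div_iff₀ hπ0]; linarith [Real.pi_le_four]
  rcases eq_or_lt_of_le hn with h | h
  · have hs0 : s = 0 := by omega
    simp [← h, hs0]
  · have hn2 : 2 ≤ n := h
    have hn0 : (0:ℝ) < (n:ℝ) := by exact_mod_cast (by omega : 0 < n)
    set C : ℝ := (4 / π) ^ s * ((n.factorial : ℝ) / (n : ℝ) ^ n) with hC
    have hC0 : 0 ≤ C := by positivity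
    have hsq : C ^ 2 ≤ 1 := by
      have e : C ^ 2 = (4/π) ^ (2*s) * ((n.factorial:ℝ)^2 / (n:ℝ)^(2*n)) := by
        rw [hC]; ring
      rw [e]
      have h2 : (4/π:ℝ) ^ (2*s) ≤ (4/π) ^ n := pow_le_pow_right₀ h1 hs
      have h3 := aux_key n hn2
      have hpos : (0:ℝ) < (n:ℝ)^(2*n) := by positivity
      calc (4/π:ℝ)^(2*s) * ((n.factorial:ℝ)^2 / (n:ℝ)^(2*n))
          ≤ (4/π)^n * ((n.factorial:ℝ)^2 / (n:ℝ)^(2*n)) := by gcongr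
        _ = (4/π)^n * (n.factorial:ℝ)^2 / (n:ℝ)^(2*n) := by ring
        _ ≤ 1 := by rw [div_le_one hpos]; exact h3
    nlinarith


end MinkAux

open Effective IsDedekindDomain NumberField in
/-- **Minkowski.** Every ideal class of `O_K` contains a nonzero integral ideal all of whose
prime divisors have residue fields of cardinality at most `√D_K`. -/
theorem exists_representative_small_primes (K : Type*) [Field K] [NumberField K] :
    ∀ c : ClassGroup (𝓞 K), ∃ I : (Ideal (𝓞 K))⁰,
      ClassGroup.mk0 I = c ∧
      ∀ P : Ideal (𝓞 K), P.IsPrime → P ∣ (I : Ideal (𝓞 K)) →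
        (Nat.card (𝓞 K ⧸ P) : ℝ) ≤ Real.sqrt (absDiscr K) := by
  show _
  unfold Effective.absDiscr
  intro c
  obtain ⟨I, hIc, hI⟩ := NumberField.exists_ideal_in_class_of_norm_le (K := K) c
  refine ⟨I, hIc, fun P hP hPd => ?_⟩
  have hconst := MinkAux.aux_const (Module.finrank ℚ K) (InfinitePlace.nrComplexPlaces K) Module.finrank_pos
    (by linarith [InfinitePlace.card_add_two_mul_card_eq_rank K])
  have hd0 : (0:ℝ) ≤ Real.sqrt |(discr K : ℝ)| := Real.sqrt_nonneg _
  have hNI : (Ideal.absNorm (I : Ideal (𝓞 K)) : ℝ) ≤ Real.sqrt |(discr K : ℝ)| := by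
    calc (Ideal.absNorm (I : Ideal (𝓞 K)) : ℝ)
        ≤ (4 / Real.pi) ^ InfinitePlace.nrComplexPlaces K *
            (((Module.finrank ℚ K).factorial : ℝ) / (Module.finrank ℚ K : ℝ) ^ (Module.finrank ℚ K) *
              Real.sqrt |(discr K : ℝ)|) := by
          convert hI using 3
      _ = ((4 / Real.pi) ^ InfinitePlace.nrComplexPlaces K *
            (((Module.finrank ℚ K).factorial : ℝ) / (Module.finrank ℚ K : ℝ) ^ (Module.finrank ℚ K))) *
              Real.sqrt |(discr K : ℝ)| := by ring
      _ ≤ 1 * Real.sqrt |(discr K : ℝ)| := by gcongr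
      _ = Real.sqrt |(discr K : ℝ)| := one_mul _
  have hdvd : Ideal.absNorm P ∣ Ideal.absNorm (I : Ideal (𝓞 K)) := map_dvd _ hPd
  have hne : Ideal.absNorm (I : Ideal (𝓞 K)) ≠ 0 :=
    Ideal.absNorm_ne_zero_of_nonZeroDivisors I
  have hle : Ideal.absNorm P ≤ Ideal.absNorm (I : Ideal (𝓞 K)) :=
    Nat.le_of_dvd (Nat.pos_of_ne_zero hne) hdvd
  have hcardeq : Nat.card (𝓞 K ⧸ P) = Ideal.absNorm P := by
    rw [Ideal.absNorm_apply, Submodule.cardQuot_apply]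
  rw [hcardeq]
  have : Real.sqrt ((NumberField.discr K).natAbs : ℝ) = Real.sqrt |(discr K : ℝ)| := by
    congr 1
    rw [Nat.cast_natAbs, Int.cast_abs]
  rw [this]
  exact le_trans (by exact_mod_cast hle) hNI
end

section
/- Let K be a number field, let G(X,Y) = Σ_{i=0}^n β_i X^{n−i} Y^i be a binary form of degree n ≥ 1 over K, and let ψ ∈ GL₂(K) have all four entries of absolute multiplicative Weil height at most H₀. Then the absolute multiplicative height of ψ*G satisfies H(ψ*G) ≤ (n+1) · 2^{3n(n+1)} · H₀^{2n(n+1)} · ∏_{i=0}^n H(β_i). -/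
open scoped NNReal
open IsDedekindDomain NumberField Polynomial

namespace PBAux

open Effective MvPolynomial

noncomputable section

variable {K : Type*} [Field K] [NumberField K]

/-- The `v`-adic absolute value with values in `ℝ≥0`. -/
def vA (v : HeightOneSpectrum (𝓞 K)) (x : K) : ℝ≥0 :=
  WithZeroMulInt.toNNReal (placeNorm_ne_zero v) (v.valuation K x)

lemma vAbs_eq_vA (v : HeightOneSpectrum (𝓞 K)) (x : K) : vAbs v x = (vA v x : ℝ) := rfl

lemma one_lt_placeNormNN (v : HeightOneSpectrum (𝓞 K)) : 1 < (placeNorm v : ℝ≥0) := by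
  have h0 : placeNorm v ≠ 0 := by
    intro h
    exact placeNorm_ne_zero v (by rw [h]; simp)
  have h1 : placeNorm v ≠ 1 := by
    intro h
    exact v.isPrime.ne_top (Ideal.absNorm_eq_one_iff.mp h)
  have h2 : 2 ≤ placeNorm v := by omega
  exact_mod_cast lt_of_lt_of_le one_lt_two (by exact_mod_cast h2)

lemma vA_mono (v : HeightOneSpectrum (𝓞 K)) :
    Monotone (WithZeroMulInt.toNNReal (placeNorm_ne_zero v)) :=
  (WithZeroMulInt.toNNReal_strictMono (one_lt_placeNormNN v)).monotone

lemma vA_one (v : HeightOneSpectrum (𝓞 K)) : vA v (1 : K) = 1 := by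
  simp [vA]

lemma vA_zero (v : HeightOneSpectrum (𝓞 K)) : vA v (0 : K) = 0 := by
  simp [vA]

lemma vA_mul (v : HeightOneSpectrum (𝓞 K)) (x y : K) : vA v (x * y) = vA v x * vA v y := by
  simp [vA, map_mul]

lemma vA_pow (v : HeightOneSpectrum (𝓞 K)) (x : K) (k : ℕ) : vA v (x ^ k) = vA v x ^ k := by
  simp [vA, map_pow]

lemma vA_add_le (v : HeightOneSpectrum (𝓞 K)) (x y : K) :
    vA v (x + y) ≤ max (vA v x) (vA v y) := by
  have h := Valuation.map_add (v.valuation K) x y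
  have := vA_mono v h
  rwa [Monotone.map_max (vA_mono v)] at this

lemma vA_sum_le {ι : Type*} (v : HeightOneSpectrum (𝓞 K)) (s : Finset ι) (f : ι → K)
    {B : ℝ≥0} (h : ∀ i ∈ s, vA v (f i) ≤ B) : vA v (∑ i ∈ s, f i) ≤ B := by
  classical
  induction s using Finset.induction with
  | empty => simp [vA_zero]
  | @insert a s hx ih =>
    rw [Finset.sum_insert hx]
    refine le_trans (vA_add_le v _ _) (max_le (h a (by simp)) (ih fun i hi => h i (by simp [hi])))

end

end PBAux
namespace PBAux

noncomputable section

open Effective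

variable {K : Type*} [Field K] [NumberField K]

/-- The absolute value attached to an infinite place, with values in `ℝ≥0`. -/
def wA (w : InfinitePlace K) (x : K) : ℝ≥0 := ⟨w x, apply_nonneg w x⟩

lemma wA_coe (w : InfinitePlace K) (x : K) : (wA w x : ℝ) = w x := rfl

lemma wA_one (w : InfinitePlace K) : wA w (1 : K) = 1 := by
  ext; simp [wA_coe]

lemma wA_zero (w : InfinitePlace K) : wA w (0 : K) = 0 := by
  ext; simp [wA_coe]

lemma wA_mul (w : InfinitePlace K) (x y : K) : wA w (x * y) = wA w x * wA w y := by
  ext; simp [wA_coe]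

lemma wA_add_le (w : InfinitePlace K) (x y : K) : wA w (x + y) ≤ wA w x + wA w y := by
  rw [← NNReal.coe_le_coe]
  push_cast
  exact w.1.add_le x y

/-- The (nonarchimedean) Gauss norm of a binary form. -/
def gauss (v : HeightOneSpectrum (𝓞 K)) (P : MvPolynomial (Fin 2) K) : ℝ≥0 :=
  P.support.sup fun m => vA v (MvPolynomial.coeff m P)

lemma vA_coeff_le_gauss (v : HeightOneSpectrum (𝓞 K)) (P : MvPolynomial (Fin 2) K)
    (m : (Fin 2) →₀ ℕ) : vA v (MvPolynomial.coeff m P) ≤ gauss v P := by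
  by_cases h : m ∈ P.support
  · exact Finset.le_sup (f := fun m => vA v (MvPolynomial.coeff m P)) h
  · rw [MvPolynomial.notMem_support_iff.mp h, vA_zero]
    exact zero_le

lemma gauss_le (v : HeightOneSpectrum (𝓞 K)) {P : MvPolynomial (Fin 2) K} {B : ℝ≥0}
    (h : ∀ m, vA v (MvPolynomial.coeff m P) ≤ B) : gauss v P ≤ B :=
  Finset.sup_le fun m _ => h m

lemma gauss_monomial_le (v : HeightOneSpectrum (𝓞 K)) (μ : (Fin 2) →₀ ℕ) (c : K) :
    gauss v (MvPolynomial.monomial μ c) ≤ vA v c := by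
  refine gauss_le v fun m => ?_
  rw [MvPolynomial.coeff_monomial]
  split
  · next h => subst h; exact le_rfl
  · rw [vA_zero]; exact zero_le

lemma gauss_sum_le {ι : Type*} (v : HeightOneSpectrum (𝓞 K)) (s : Finset ι)
    (f : ι → MvPolynomial (Fin 2) K) {B : ℝ≥0} (h : ∀ i ∈ s, gauss v (f i) ≤ B) :
    gauss v (∑ i ∈ s, f i) ≤ B := by
  refine gauss_le v fun m => ?_
  rw [MvPolynomial.coeff_sum]
  exact vA_sum_le v s _ fun i hi => le_trans (vA_coeff_le_gauss v (f i) m) (h i hi)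

lemma gauss_mul_le (v : HeightOneSpectrum (𝓞 K)) (P Q : MvPolynomial (Fin 2) K) :
    gauss v (P * Q) ≤ gauss v P * gauss v Q := by
  conv_lhs => rw [P.as_sum, Finset.sum_mul]
  refine gauss_sum_le v _ _ fun μ hμ => ?_
  conv_lhs => rw [Q.as_sum, Finset.mul_sum]
  refine gauss_sum_le v _ _ fun ν hν => ?_
  rw [MvPolynomial.monomial_mul]
  refine le_trans (gauss_monomial_le v _ _) ?_
  rw [vA_mul]
  exact mul_le_mul' (le_trans (vA_coeff_le_gauss v P μ) le_rfl)
    (vA_coeff_le_gauss v Q ν)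

lemma gauss_one_le (v : HeightOneSpectrum (𝓞 K)) : gauss v (1 : MvPolynomial (Fin 2) K) ≤ 1 := by
  have : (1 : MvPolynomial (Fin 2) K) = MvPolynomial.monomial 0 (1 : K) := by rw [MvPolynomial.monomial_zero', MvPolynomial.C_1]
  rw [this]
  exact le_trans (gauss_monomial_le v _ _) (by rw [vA_one])

lemma gauss_pow_le (v : HeightOneSpectrum (𝓞 K)) (P : MvPolynomial (Fin 2) K) (k : ℕ) :
    gauss v (P ^ k) ≤ gauss v P ^ k := by
  induction k with
  | zero => simpa using gauss_one_le v
  | succ k ih =>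
    rw [pow_succ, pow_succ]
    exact le_trans (gauss_mul_le v _ _) (mul_le_mul' ih le_rfl)

/-- The (archimedean) `ℓ¹` norm of a binary form. -/
def l1 (w : InfinitePlace K) (P : MvPolynomial (Fin 2) K) : ℝ≥0 :=
  ∑ m ∈ P.support, wA w (MvPolynomial.coeff m P)

lemma sum_wA_coeff_le (w : InfinitePlace K) (P : MvPolynomial (Fin 2) K)
    (s : Finset ((Fin 2) →₀ ℕ)) : ∑ m ∈ s, wA w (MvPolynomial.coeff m P) ≤ l1 w P := by
  classical
  have h1 : ∑ m ∈ s, wA w (MvPolynomial.coeff m P) = ∑ m ∈ s ∩ P.support, wA w (MvPolynomial.coeff m P) := by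
    refine (Finset.sum_subset Finset.inter_subset_left fun m hm hm' => ?_).symm
    have : m ∉ P.support := fun hmem => hm' (Finset.mem_inter.mpr ⟨hm, hmem⟩)
    rw [MvPolynomial.notMem_support_iff.mp this, wA_zero]
  rw [h1]
  exact Finset.sum_le_sum_of_subset Finset.inter_subset_right

lemma wA_coeff_le_l1 (w : InfinitePlace K) (P : MvPolynomial (Fin 2) K) (m : (Fin 2) →₀ ℕ) :
    wA w (MvPolynomial.coeff m P) ≤ l1 w P := by
  simpa using sum_wA_coeff_le w P {m}

lemma l1_add_le (w : InfinitePlace K) (P Q : MvPolynomial (Fin 2) K) :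
    l1 w (P + Q) ≤ l1 w P + l1 w Q := by
  have h1 : l1 w (P + Q) ≤
      ∑ m ∈ (P + Q).support, (wA w (MvPolynomial.coeff m P) + wA w (MvPolynomial.coeff m Q)) := by
    refine Finset.sum_le_sum fun m _ => ?_
    rw [MvPolynomial.coeff_add]
    exact wA_add_le w _ _
  refine le_trans h1 ?_
  rw [Finset.sum_add_distrib]
  exact add_le_add (sum_wA_coeff_le w P _) (sum_wA_coeff_le w Q _)

lemma l1_zero (w : InfinitePlace K) : l1 w (0 : MvPolynomial (Fin 2) K) = 0 := by
  simp [l1]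

lemma l1_sum_le {ι : Type*} (w : InfinitePlace K) (s : Finset ι)
    (f : ι → MvPolynomial (Fin 2) K) : l1 w (∑ i ∈ s, f i) ≤ ∑ i ∈ s, l1 w (f i) := by
  classical
  induction s using Finset.induction with
  | empty => simp [l1_zero]
  | @insert a s hx ih =>
    rw [Finset.sum_insert hx, Finset.sum_insert hx]
    exact le_trans (l1_add_le w _ _) (add_le_add le_rfl ih)

lemma l1_monomial_le (w : InfinitePlace K) (μ : (Fin 2) →₀ ℕ) (c : K) :
    l1 w (MvPolynomial.monomial μ c) ≤ wA w c := by
  refine le_trans (le_of_eq rfl) ?_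
  calc l1 w (MvPolynomial.monomial μ c) = ∑ m ∈ (MvPolynomial.monomial μ c).support, wA w (MvPolynomial.coeff m (MvPolynomial.monomial μ c)) := rfl
    _ ≤ ∑ m ∈ {μ}, wA w (MvPolynomial.coeff m (MvPolynomial.monomial μ c)) := by
        refine Finset.sum_le_sum_of_subset (MvPolynomial.support_monomial_subset)
    _ = wA w c := by simp [MvPolynomial.coeff_monomial]

lemma l1_mul_le (w : InfinitePlace K) (P Q : MvPolynomial (Fin 2) K) :
    l1 w (P * Q) ≤ l1 w P * l1 w Q := by
  conv_lhs => rw [P.as_sum, Finset.sum_mul]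
  refine le_trans (l1_sum_le w _ _) ?_
  rw [l1, Finset.sum_mul]
  refine Finset.sum_le_sum fun μ hμ => ?_
  conv_lhs => rw [Q.as_sum, Finset.mul_sum]
  refine le_trans (l1_sum_le w _ _) ?_
  calc ∑ ν ∈ Q.support, l1 w (MvPolynomial.monomial μ (MvPolynomial.coeff μ P) * MvPolynomial.monomial ν (MvPolynomial.coeff ν Q))
      ≤ ∑ ν ∈ Q.support, wA w (MvPolynomial.coeff μ P) * wA w (MvPolynomial.coeff ν Q) := by
        refine Finset.sum_le_sum fun ν hν => ?_
        rw [MvPolynomial.monomial_mul]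
        exact le_trans (l1_monomial_le w _ _) (le_of_eq (wA_mul w _ _))
    _ = wA w (MvPolynomial.coeff μ P) * l1 w Q := by rw [l1, Finset.mul_sum]

lemma l1_one_le (w : InfinitePlace K) : l1 w (1 : MvPolynomial (Fin 2) K) ≤ 1 := by
  have : (1 : MvPolynomial (Fin 2) K) = MvPolynomial.monomial 0 (1 : K) := by rw [MvPolynomial.monomial_zero', MvPolynomial.C_1]
  rw [this]
  exact le_trans (l1_monomial_le w _ _) (le_of_eq (wA_one w))

lemma l1_pow_le (w : InfinitePlace K) (P : MvPolynomial (Fin 2) K) (k : ℕ) :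
    l1 w (P ^ k) ≤ l1 w P ^ k := by
  induction k with
  | zero => simpa using l1_one_le w
  | succ k ih =>
    rw [pow_succ, pow_succ]
    exact le_trans (l1_mul_le w _ _) (mul_le_mul' ih le_rfl)

end

end PBAux
namespace PBAux

noncomputable section

open Effective

variable {K : Type*} [Field K] [NumberField K]

lemma pullback_binForm_eq (n : ℕ) (β : Fin (n + 1) → K) (ψ : Matrix (Fin 2) (Fin 2) K) :
    pullback ψ (binForm n β) = ∑ i : Fin (n + 1), MvPolynomial.C (β i) *
      (MvPolynomial.C (ψ 0 0) * MvPolynomial.X 0 + MvPolynomial.C (ψ 0 1) * MvPolynomial.X 1)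
        ^ (n - (i : ℕ)) *
      (MvPolynomial.C (ψ 1 0) * MvPolynomial.X 0 + MvPolynomial.C (ψ 1 1) * MvPolynomial.X 1)
        ^ (i : ℕ) := by
  simp only [pullback, binForm, map_sum, map_mul, map_pow, MvPolynomial.bind₁_X_right,
    MvPolynomial.bind₁_C_right]

lemma gauss_linear_le (v : HeightOneSpectrum (𝓞 K)) (a b : K) {B : ℝ≥0}
    (ha : vA v a ≤ B) (hb : vA v b ≤ B) :
    gauss v (MvPolynomial.C a * MvPolynomial.X 0 + MvPolynomial.C b * MvPolynomial.X 1
      : MvPolynomial (Fin 2) K) ≤ B := by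
  refine gauss_le v fun m => ?_
  rw [MvPolynomial.coeff_add]
  have h0 : MvPolynomial.C a * (MvPolynomial.X 0 : MvPolynomial (Fin 2) K) =
      MvPolynomial.monomial (Finsupp.single 0 1) a := by
    rw [MvPolynomial.X, MvPolynomial.C_mul_monomial, mul_one]
  have h1 : MvPolynomial.C b * (MvPolynomial.X 1 : MvPolynomial (Fin 2) K) =
      MvPolynomial.monomial (Finsupp.single 1 1) b := by
    rw [MvPolynomial.X, MvPolynomial.C_mul_monomial, mul_one]
  refine le_trans (vA_add_le v _ _) (max_le ?_ ?_)
  · rw [h0]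
    exact le_trans (vA_coeff_le_gauss v _ m) (le_trans (gauss_monomial_le v _ _) ha)
  · rw [h1]
    exact le_trans (vA_coeff_le_gauss v _ m) (le_trans (gauss_monomial_le v _ _) hb)

lemma l1_linear_le (w : InfinitePlace K) (a b : K) {B : ℝ≥0}
    (ha : wA w a ≤ B) (hb : wA w b ≤ B) :
    l1 w (MvPolynomial.C a * MvPolynomial.X 0 + MvPolynomial.C b * MvPolynomial.X 1
      : MvPolynomial (Fin 2) K) ≤ 2 * B := by
  have h0 : MvPolynomial.C a * (MvPolynomial.X 0 : MvPolynomial (Fin 2) K) =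
      MvPolynomial.monomial (Finsupp.single 0 1) a := by
    rw [MvPolynomial.X, MvPolynomial.C_mul_monomial, mul_one]
  have h1 : MvPolynomial.C b * (MvPolynomial.X 1 : MvPolynomial (Fin 2) K) =
      MvPolynomial.monomial (Finsupp.single 1 1) b := by
    rw [MvPolynomial.X, MvPolynomial.C_mul_monomial, mul_one]
  rw [two_mul]
  refine le_trans (l1_add_le w _ _) (add_le_add ?_ ?_)
  · rw [h0]; exact le_trans (l1_monomial_le w _ _) ha
  · rw [h1]; exact le_trans (l1_monomial_le w _ _) hb

/-- The product of the four local factors of the matrix `ψ`. -/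
def matFac (g : K → ℝ≥0) (ψ : Matrix (Fin 2) (Fin 2) K) : ℝ≥0 :=
  ∏ p : Fin 2 × Fin 2, max 1 (g (ψ p.1 p.2))

lemma one_le_matFac (g : K → ℝ≥0) (ψ : Matrix (Fin 2) (Fin 2) K) : 1 ≤ matFac g ψ :=
  Finset.one_le_prod' fun p _ => le_max_left _ _

lemma le_matFac (g : K → ℝ≥0) (ψ : Matrix (Fin 2) (Fin 2) K) (j l : Fin 2) :
    g (ψ j l) ≤ matFac g ψ :=
  le_trans (le_max_right 1 _)
    (Finset.single_le_prod' (f := fun p : Fin 2 × Fin 2 => max 1 (g (ψ p.1 p.2)))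
      (fun p _ => le_max_left _ _) (Finset.mem_univ ((j, l) : Fin 2 × Fin 2)))

lemma gauss_pullback_le (n : ℕ) (β : Fin (n + 1) → K) (ψ : Matrix (Fin 2) (Fin 2) K)
    (v : HeightOneSpectrum (𝓞 K)) :
    gauss v (pullback ψ (binForm n β)) ≤
      (∏ i, max 1 (vA v (β i))) * matFac (vA v) ψ ^ n := by
  rw [pullback_binForm_eq]
  refine gauss_sum_le v _ _ fun i _ => ?_
  have hL0 := gauss_linear_le v (ψ 0 0) (ψ 0 1) (le_matFac (vA v) ψ 0 0) (le_matFac (vA v) ψ 0 1)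
  have hL1 := gauss_linear_le v (ψ 1 0) (ψ 1 1) (le_matFac (vA v) ψ 1 0) (le_matFac (vA v) ψ 1 1)
  calc gauss v (MvPolynomial.C (β i) * _ ^ (n - (i : ℕ)) * _ ^ (i : ℕ))
      ≤ gauss v (MvPolynomial.C (β i) * _ ^ (n - (i : ℕ))) * gauss v (_ ^ (i : ℕ)) :=
        gauss_mul_le v _ _
    _ ≤ gauss v (MvPolynomial.C (β i)) * gauss v (_ ^ (n - (i : ℕ))) * gauss v (_ ^ (i : ℕ)) :=
        mul_le_mul' (gauss_mul_le v _ _) le_rfl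
    _ ≤ vA v (β i) * matFac (vA v) ψ ^ (n - (i : ℕ)) * matFac (vA v) ψ ^ (i : ℕ) := by
        refine mul_le_mul' (mul_le_mul' ?_ ?_) ?_
        · have : MvPolynomial.C (β i) =
            MvPolynomial.monomial (0 : Fin 2 →₀ ℕ) (β i) := by
              rw [MvPolynomial.C_apply]
          rw [this]
          exact gauss_monomial_le v _ _
        · exact le_trans (gauss_pow_le v _ _) (pow_le_pow_left' hL0 _)
        · exact le_trans (gauss_pow_le v _ _) (pow_le_pow_left' hL1 _)
    _ = vA v (β i) * matFac (vA v) ψ ^ n := by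
        rw [mul_assoc, ← pow_add, Nat.sub_add_cancel (Nat.lt_succ_iff.mp i.isLt)]
    _ ≤ (∏ i, max 1 (vA v (β i))) * matFac (vA v) ψ ^ n := by
        refine mul_le_mul' ?_ le_rfl
        exact le_trans (le_max_right 1 _)
          (Finset.single_le_prod' (f := fun i => max 1 (vA v (β i)))
            (fun p _ => le_max_left _ _) (Finset.mem_univ i))

lemma l1_pullback_le (n : ℕ) (β : Fin (n + 1) → K) (ψ : Matrix (Fin 2) (Fin 2) K)
    (w : InfinitePlace K) :
    l1 w (pullback ψ (binForm n β)) ≤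
      ((n : ℝ≥0) + 1) * 2 ^ n * (∏ i, max 1 (wA w (β i))) * matFac (wA w) ψ ^ n := by
  rw [pullback_binForm_eq]
  refine le_trans (l1_sum_le w _ _) ?_
  have key : ∀ i : Fin (n + 1),
      l1 w (MvPolynomial.C (β i) *
        (MvPolynomial.C (ψ 0 0) * MvPolynomial.X 0 + MvPolynomial.C (ψ 0 1) * MvPolynomial.X 1)
          ^ (n - (i : ℕ)) *
        (MvPolynomial.C (ψ 1 0) * MvPolynomial.X 0 + MvPolynomial.C (ψ 1 1) * MvPolynomial.X 1)
          ^ (i : ℕ)) ≤ 2 ^ n * (∏ i, max 1 (wA w (β i))) * matFac (wA w) ψ ^ n := by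
    intro i
    have hL0 := l1_linear_le w (ψ 0 0) (ψ 0 1) (le_matFac (wA w) ψ 0 0) (le_matFac (wA w) ψ 0 1)
    have hL1 := l1_linear_le w (ψ 1 0) (ψ 1 1) (le_matFac (wA w) ψ 1 0) (le_matFac (wA w) ψ 1 1)
    calc l1 w _
        ≤ l1 w (MvPolynomial.C (β i) * _ ^ (n - (i : ℕ))) * l1 w (_ ^ (i : ℕ)) := l1_mul_le w _ _
      _ ≤ l1 w (MvPolynomial.C (β i)) * l1 w (_ ^ (n - (i : ℕ))) * l1 w (_ ^ (i : ℕ)) :=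
          mul_le_mul' (l1_mul_le w _ _) le_rfl
      _ ≤ wA w (β i) * (2 * matFac (wA w) ψ) ^ (n - (i : ℕ)) * (2 * matFac (wA w) ψ) ^ (i : ℕ) := by
          refine mul_le_mul' (mul_le_mul' ?_ ?_) ?_
          · have : MvPolynomial.C (β i) =
              MvPolynomial.monomial (0 : Fin 2 →₀ ℕ) (β i) := by rw [MvPolynomial.C_apply]
            rw [this]
            exact l1_monomial_le w _ _
          · exact le_trans (l1_pow_le w _ _) (pow_le_pow_left' hL0 _)
          · exact le_trans (l1_pow_le w _ _) (pow_le_pow_left' hL1 _)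
      _ = wA w (β i) * (2 ^ n * matFac (wA w) ψ ^ n) := by
          rw [mul_assoc, ← pow_add, Nat.sub_add_cancel (Nat.lt_succ_iff.mp i.isLt), mul_pow]
      _ ≤ (∏ i, max 1 (wA w (β i))) * (2 ^ n * matFac (wA w) ψ ^ n) := by
          refine mul_le_mul' ?_ le_rfl
          exact le_trans (le_max_right 1 _)
            (Finset.single_le_prod' (f := fun i => max 1 (wA w (β i)))
              (fun p _ => le_max_left _ _) (Finset.mem_univ i))
      _ = 2 ^ n * (∏ i, max 1 (wA w (β i))) * matFac (wA w) ψ ^ n := by ring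
  refine le_trans (Finset.sum_le_sum fun i _ => key i) ?_
  rw [Finset.sum_const, Finset.card_univ, Fintype.card_fin]
  rw [nsmul_eq_mul]
  push_cast
  ring_nf
  exact le_rfl

end

end PBAux
namespace PBAux

noncomputable section

open Effective Function

variable {K : Type*} [Field K] [NumberField K]

/-- Archimedean part of the height of `α`, in `ℝ≥0`. -/
def PAn (α : K) : ℝ≥0 := ∏ w : InfinitePlace K, max 1 (wA w α) ^ w.mult

/-- Nonarchimedean part of the height of `α`, in `ℝ≥0`. -/
def PNn (α : K) : ℝ≥0 := ∏ᶠ v : HeightOneSpectrum (𝓞 K), max 1 (vA v α)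

lemma nfac_finite (α : K) :
    (mulSupport fun v : HeightOneSpectrum (𝓞 K) => max 1 (vA v α)).Finite := by
  rcases eq_or_ne α 0 with rfl | hα
  · have : (mulSupport fun v : HeightOneSpectrum (𝓞 K) => max 1 (vA v (0 : K))) = ∅ := by
      ext v; simp [vA_zero]
    rw [this]; exact Set.finite_empty
  · obtain ⟨x, y, hy, hxy⟩ := IsFractionRing.div_surjective (A := 𝓞 K) α
    have hy0 : y ≠ 0 := nonZeroDivisors.ne_zero hy
    refine Set.Finite.subset (Ideal.finite_factors (I := Ideal.span {y})
      (by simpa using hy0)) ?_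
    intro v hv
    simp only [mem_mulSupport] at hv
    have h1 : 1 < vA v α := by
      rcases lt_or_ge 1 (vA v α) with h | h
      · exact h
      · exact absurd (max_eq_left h) hv
    have hval : 1 < v.valuation K α := by
      by_contra hle
      push_neg at hle
      have := vA_mono v hle
      rw [map_one] at this
      exact absurd this (not_le.mpr (by simpa [vA] using h1))
    have hvy : v.valuation K (algebraMap (𝓞 K) K y) < 1 := by
      have hx1 : v.valuation K (algebraMap (𝓞 K) K x) ≤ 1 := v.valuation_le_one x
      have hyK : algebraMap (𝓞 K) K y ≠ 0 := by simpa using hy0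
      have hmul : v.valuation K α * v.valuation K (algebraMap (𝓞 K) K y)
          = v.valuation K (algebraMap (𝓞 K) K x) := by
        rw [← map_mul]
        congr 1
        rw [← hxy, div_mul_cancel₀ _ hyK]
      refine lt_of_le_of_ne (v.valuation_le_one y) fun heq => ?_
      rw [heq, mul_one] at hmul
      rw [hmul] at hval
      exact absurd hx1 (not_le.mpr hval)
    have := (v.valuation_lt_one_iff_dvd y).mp hvy
    simpa using this

lemma one_le_PNn (α : K) : 1 ≤ PNn α :=
  one_le_finprod' fun v => le_max_left _ _

lemma one_le_PAn (α : K) : 1 ≤ PAn α :=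
  Finset.one_le_prod' fun w _ => one_le_pow_of_one_le' (le_max_left _ _) _

/-- Coercion of a `ℝ≥0`-valued finprod. -/
lemma coe_finprod {ι : Type*} (f : ι → ℝ≥0) : ((∏ᶠ i, f i : ℝ≥0) : ℝ) = ∏ᶠ i, (f i : ℝ) := by
  by_cases hf : (mulSupport f).Finite
  · exact NNReal.toRealHom.toMonoidHom.map_finprod hf
  · rw [finprod_of_infinite_mulSupport hf, finprod_of_infinite_mulSupport, NNReal.coe_one]
    have : (mulSupport fun i => (f i : ℝ)) = mulSupport f := by
      ext i; simp [mulSupport]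
    rwa [this]

lemma iSup_fin2 (f : Fin 2 → ℝ) : (⨆ i, f i) = max (f 0) (f 1) := by
  apply le_antisymm
  · refine ciSup_le fun i => ?_
    fin_cases i
    · exact le_max_left _ _
    · exact le_max_right _ _
  · refine max_le ?_ ?_ <;>
      exact le_ciSup (Set.Finite.bddAbove (Set.finite_range f)) _

lemma sup_pair_arch (w : InfinitePlace K) (α : K) :
    (⨆ i, w ((![1, α] : Fin 2 → K) i)) = ((max 1 (wA w α) : ℝ≥0) : ℝ) := by
  rw [iSup_fin2 fun i => w ((![1, α] : Fin 2 → K) i)]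
  rw [NNReal.coe_max, NNReal.coe_one, wA_coe]
  simp

lemma sup_pair_nonarch (v : HeightOneSpectrum (𝓞 K)) (α : K) :
    (⨆ i, vAbs v ((![1, α] : Fin 2 → K) i)) = ((max 1 (vA v α) : ℝ≥0) : ℝ) := by
  rw [iSup_fin2 fun i => vAbs v ((![1, α] : Fin 2 → K) i)]
  rw [NNReal.coe_max, NNReal.coe_one]
  have h0 : vAbs v ((![1, α] : Fin 2 → K) 0) = ((1 : ℝ≥0) : ℝ) := by
    rw [show (![1, α] : Fin 2 → K) 0 = 1 from rfl, vAbs_eq_vA, vA_one]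
  have h1 : vAbs v ((![1, α] : Fin 2 → K) 1) = (vA v α : ℝ) := by
    rw [show (![1, α] : Fin 2 → K) 1 = α from rfl, vAbs_eq_vA]
  rw [h0, h1, NNReal.coe_one]

lemma mulHeight₁_eq (α : K) :
    mulHeight₁ α = ((PAn α * PNn α : ℝ≥0) : ℝ) ^ ((Module.finrank ℚ K : ℝ)⁻¹) := by
  rw [mulHeight₁, mulHeight]
  congr 1
  rw [NNReal.coe_mul]
  congr 1
  · rw [PAn, NNReal.coe_prod]
    refine Finset.prod_congr rfl fun w _ => ?_
    rw [sup_pair_arch, NNReal.coe_pow]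
  · rw [PNn, coe_finprod]
    exact finprod_congr fun v => sup_pair_nonarch v α

lemma one_le_mulHeight₁ (α : K) : 1 ≤ mulHeight₁ α := by
  rw [mulHeight₁_eq]
  have h1 : (1 : ℝ) ≤ ((PAn α * PNn α : ℝ≥0) : ℝ) := by
    have : (1 : ℝ≥0) ≤ PAn α * PNn α :=
      le_trans (one_le_PAn α) (le_mul_of_one_le_right zero_le (one_le_PNn α))
    exact_mod_cast this
  calc (1 : ℝ) = 1 ^ ((Module.finrank ℚ K : ℝ)⁻¹) := (Real.one_rpow _).symm
    _ ≤ _ := Real.rpow_le_rpow zero_le_one h1 (by positivity)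

end

end PBAux
namespace PBAux

noncomputable section

open Effective Function

variable {K : Type*} [Field K] [NumberField K]

lemma mulSupport_finset_prod_finite {ι κ : Type*} (s : Finset κ) (f : κ → ι → ℝ≥0)
    (h : ∀ k ∈ s, (mulSupport (f k)).Finite) :
    (mulSupport fun v => ∏ k ∈ s, f k v).Finite := by
  refine Set.Finite.subset (Set.Finite.biUnion s.finite_toSet h) ?_
  intro v hv
  simp only [mem_mulSupport] at hv
  by_contra hc
  simp only [Set.mem_iUnion, mem_mulSupport, not_exists] at hc
  exact hv (Finset.prod_eq_one fun k hk => by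
    by_contra h1
    exact hc k (Finset.mem_coe.mpr hk) h1)

lemma mulSupport_pow_finite {ι : Type*} {f : ι → ℝ≥0} (h : (mulSupport f).Finite) (n : ℕ) :
    (mulSupport fun v => f v ^ n).Finite := by
  refine h.subset fun v hv => ?_
  simp only [mem_mulSupport] at hv ⊢
  intro h1
  exact hv (by rw [h1, one_pow])

lemma finprod_le_finprod_nn {ι : Type*} (f g : ι → ℝ≥0) (h1 : ∀ v, 1 ≤ f v)
    (hle : ∀ v, f v ≤ g v) (hg : (mulSupport g).Finite) : ∏ᶠ v, f v ≤ ∏ᶠ v, g v := by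
  have hsub : mulSupport f ⊆ mulSupport g := by
    intro v hv
    simp only [mem_mulSupport] at hv ⊢
    intro hgv
    exact hv (le_antisymm (hgv ▸ hle v) (h1 v))
  rw [finprod_eq_prod_of_mulSupport_subset f (s := hg.toFinset) (by
        rw [Set.Finite.coe_toFinset]; exact hsub),
      finprod_eq_prod_of_mulSupport_subset g (s := hg.toFinset) (by
        rw [Set.Finite.coe_toFinset])]
  exact Finset.prod_le_prod' fun i _ => hle i

/-- The nonarchimedean local bound. -/
def Gv (n : ℕ) (β : Fin (n + 1) → K) (ψ : Matrix (Fin 2) (Fin 2) K)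
    (v : HeightOneSpectrum (𝓞 K)) : ℝ≥0 :=
  (∏ i, max 1 (vA v (β i))) * matFac (vA v) ψ ^ n

lemma Gv_finite (n : ℕ) (β : Fin (n + 1) → K) (ψ : Matrix (Fin 2) (Fin 2) K) :
    (mulSupport (Gv n β ψ)).Finite := by
  have h1 : (mulSupport fun v : HeightOneSpectrum (𝓞 K) =>
      ∏ i, max 1 (vA v (β i))).Finite :=
    mulSupport_finset_prod_finite Finset.univ _ fun i _ => nfac_finite (β i)
  have h2 : (mulSupport fun v : HeightOneSpectrum (𝓞 K) => matFac (vA v) ψ ^ n).Finite :=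
    mulSupport_pow_finite (f := fun v => matFac (vA v) ψ)
      (mulSupport_finset_prod_finite Finset.univ _ fun p _ => nfac_finite (ψ p.1 p.2)) n
  refine Set.Finite.subset (h1.union h2) ?_
  intro v hv
  simp only [mem_mulSupport, Gv] at hv
  by_contra hc
  simp only [Set.mem_union, mem_mulSupport, not_or, not_not] at hc
  exact hv (by rw [hc.1, hc.2, one_mul])

lemma one_le_Gv (n : ℕ) (β : Fin (n + 1) → K) (ψ : Matrix (Fin 2) (Fin 2) K)
    (v : HeightOneSpectrum (𝓞 K)) : 1 ≤ Gv n β ψ v :=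
  one_le_mul (Finset.one_le_prod' fun i _ => le_max_left _ _)
    (one_le_pow_of_one_le' (one_le_matFac _ _) _)

lemma finprod_Gv (n : ℕ) (β : Fin (n + 1) → K) (ψ : Matrix (Fin 2) (Fin 2) K) :
    ∏ᶠ v, Gv n β ψ v =
      (∏ i, PNn (β i)) * (∏ p : Fin 2 × Fin 2, PNn (ψ p.1 p.2)) ^ n := by
  have hf1 : (mulSupport fun v : HeightOneSpectrum (𝓞 K) =>
      ∏ i, max 1 (vA v (β i))).Finite :=
    mulSupport_finset_prod_finite Finset.univ _ fun i _ => nfac_finite (β i)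
  have hfM : (mulSupport fun v : HeightOneSpectrum (𝓞 K) => matFac (vA v) ψ).Finite :=
    mulSupport_finset_prod_finite Finset.univ _ fun p _ => nfac_finite (ψ p.1 p.2)
  rw [show Gv n β ψ = fun v => (∏ i, max 1 (vA v (β i))) * matFac (vA v) ψ ^ n from rfl]
  rw [finprod_mul_distrib hf1 (mulSupport_pow_finite hfM n)]
  congr 1
  · rw [finprod_prod_comm _ _ fun i _ => nfac_finite (β i)]
    rfl
  · rw [← finprod_pow hfM]
    congr 1
    rw [show (fun v : HeightOneSpectrum (𝓞 K) => matFac (vA v) ψ) =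
      fun v => ∏ p : Fin 2 × Fin 2, max 1 (vA v (ψ p.1 p.2)) from rfl]
    rw [finprod_prod_comm _ _ fun (p : Fin 2 × Fin 2) _ => nfac_finite (ψ p.1 p.2)]
    rfl

end

end PBAux
namespace PBAux

noncomputable section

open Effective Function

variable {K : Type*} [Field K] [NumberField K]

/-- The archimedean local bound. -/
def Gw (n : ℕ) (β : Fin (n + 1) → K) (ψ : Matrix (Fin 2) (Fin 2) K)
    (w : InfinitePlace K) : ℝ≥0 :=
  ((n : ℝ≥0) + 1) * 2 ^ n * (∏ i, max 1 (wA w (β i))) * matFac (wA w) ψ ^ n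

lemma one_le_Gw (n : ℕ) (β : Fin (n + 1) → K) (ψ : Matrix (Fin 2) (Fin 2) K)
    (w : InfinitePlace K) : 1 ≤ Gw n β ψ w := by
  refine one_le_mul (one_le_mul (one_le_mul ?_ ?_) ?_) ?_
  · exact le_add_of_nonneg_left zero_le
  · exact one_le_pow_of_one_le' one_le_two n
  · exact Finset.one_le_prod' fun i _ => le_max_left _ _
  · exact one_le_pow_of_one_le' (one_le_matFac _ _) _

lemma arch_sup_le (n : ℕ) (β : Fin (n + 1) → K) (ψ : Matrix (Fin 2) (Fin 2) K)
    (w : InfinitePlace K) :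
    (⨆ k, w ((Fin.cons 1 (bfCoeff n (pullback ψ (binForm n β))) : Fin (n + 1 + 1) → K) k))
      ≤ ((Gw n β ψ w : ℝ≥0) : ℝ) := by
  refine ciSup_le fun k => ?_
  induction k using Fin.cases with
  | zero =>
    rw [Fin.cons_zero, map_one]
    exact_mod_cast one_le_Gw n β ψ w
  | succ i =>
    rw [Fin.cons_succ, ← wA_coe]
    rw [NNReal.coe_le_coe]
    exact le_trans (wA_coeff_le_l1 w _ _) (l1_pullback_le n β ψ w)

lemma arch_one_le_sup (n : ℕ) (β : Fin (n + 1) → K) (ψ : Matrix (Fin 2) (Fin 2) K)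
    (w : InfinitePlace K) :
    (1 : ℝ) ≤ ⨆ k, w ((Fin.cons 1 (bfCoeff n (pullback ψ (binForm n β)))
      : Fin (n + 1 + 1) → K) k) := by
  have h := le_ciSup (Set.Finite.bddAbove (Set.finite_range
    fun k => w ((Fin.cons 1 (bfCoeff n (pullback ψ (binForm n β))) : Fin (n + 1 + 1) → K) k))) 0
  rwa [Fin.cons_zero, map_one] at h

lemma nonarch_sup_le (n : ℕ) (β : Fin (n + 1) → K) (ψ : Matrix (Fin 2) (Fin 2) K)
    (v : HeightOneSpectrum (𝓞 K)) :
    (⨆ k, vAbs v ((Fin.cons 1 (bfCoeff n (pullback ψ (binForm n β))) : Fin (n + 1 + 1) → K) k))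
      ≤ ((Gv n β ψ v : ℝ≥0) : ℝ) := by
  refine ciSup_le fun k => ?_
  induction k using Fin.cases with
  | zero =>
    rw [Fin.cons_zero, vAbs_eq_vA, vA_one]
    exact_mod_cast one_le_Gv n β ψ v
  | succ i =>
    rw [Fin.cons_succ, vAbs_eq_vA, NNReal.coe_le_coe]
    exact le_trans (vA_coeff_le_gauss v _ _) (gauss_pullback_le n β ψ v)

lemma nonarch_one_le_sup (n : ℕ) (β : Fin (n + 1) → K) (ψ : Matrix (Fin 2) (Fin 2) K)
    (v : HeightOneSpectrum (𝓞 K)) :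
    (1 : ℝ) ≤ ⨆ k, vAbs v ((Fin.cons 1 (bfCoeff n (pullback ψ (binForm n β)))
      : Fin (n + 1 + 1) → K) k) := by
  have h := le_ciSup (Set.Finite.bddAbove (Set.finite_range
    fun k => vAbs v ((Fin.cons 1 (bfCoeff n (pullback ψ (binForm n β)))
      : Fin (n + 1 + 1) → K) k))) 0
  rwa [Fin.cons_zero, vAbs_eq_vA, vA_one, NNReal.coe_one] at h

lemma prod_Gw (n : ℕ) (β : Fin (n + 1) → K) (ψ : Matrix (Fin 2) (Fin 2) K) :
    ∏ w : InfinitePlace K, Gw n β ψ w ^ w.mult =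
      (((n : ℝ≥0) + 1) * 2 ^ n) ^ (Module.finrank ℚ K) * (∏ i, PAn (β i)) *
        (∏ p : Fin 2 × Fin 2, PAn (ψ p.1 p.2)) ^ n := by
  have key : ∀ w : InfinitePlace K, Gw n β ψ w ^ w.mult =
      (((n : ℝ≥0) + 1) * 2 ^ n) ^ w.mult * (∏ i, max 1 (wA w (β i)) ^ w.mult) *
        (∏ p : Fin 2 × Fin 2, max 1 (wA w (ψ p.1 p.2)) ^ w.mult) ^ n := by
    intro w
    rw [Gw, mul_pow, mul_pow, Finset.prod_pow, Finset.prod_pow]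
    rw [← pow_mul (matFac (wA w) ψ), mul_comm n w.mult, pow_mul]
    rfl
  rw [Finset.prod_congr rfl fun w _ => key w, Finset.prod_mul_distrib, Finset.prod_mul_distrib]
  congr 1
  · congr 1
    · rw [Finset.prod_pow_eq_pow_sum, NumberField.InfinitePlace.sum_mult_eq]
    · rw [Finset.prod_comm]
      rfl
  · rw [Finset.prod_pow, Finset.prod_comm]
    rfl

end

end PBAux
namespace PBAux
lemma rpow_mul3 (a b c E : ℝ) (ha : 0 ≤ a) (hb : 0 ≤ b) (hc : 0 ≤ c) :
    (a * b * c) ^ E = a ^ E * b ^ E * c ^ E := by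
  rw [Real.mul_rpow (mul_nonneg ha hb) hc, Real.mul_rpow ha hb]
end PBAux

set_option maxHeartbeats 1000000 in
open Effective IsDedekindDomain NumberField in
/-- Height bound for the pullback of a binary form by a matrix with entries of height at
most `H₀`. -/
theorem pullback_height (K : Type*) [Field K] [NumberField K] (n : ℕ) (hn : 1 ≤ n)
    (β : Fin (n + 1) → K) (ψ : Matrix (Fin 2) (Fin 2) K) (hψ : IsUnit ψ.det)
    (H₀ : ℝ) (hH : ∀ i j, mulHeight₁ (ψ i j) ≤ H₀) :
    bfMulHeight n (pullback ψ (binForm n β)) ≤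
      ((n : ℝ) + 1) * 2 ^ (3 * n * (n + 1)) * H₀ ^ (2 * n * (n + 1)) *
        ∏ i, mulHeight₁ (β i) := by
  classical
  open PBAux in
  have hD0 : 0 < Module.finrank ℚ K := Module.finrank_pos
  set D := Module.finrank ℚ K with hDdef
  set E := ((D : ℝ))⁻¹ with hEdef
  have hE0 : 0 ≤ E := by positivity
  -- the point of coefficients
  set x : Fin (n + 1 + 1) → K := Fin.cons 1 (bfCoeff n (pullback ψ (binForm n β))) with hxdef
  have hstart : bfMulHeight n (pullback ψ (binForm n β)) =
      ((∏ w : InfinitePlace K, (⨆ i, w (x i)) ^ w.mult) *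
        ∏ᶠ v : HeightOneSpectrum (𝓞 K), ⨆ i, vAbs v (x i)) ^ E := rfl
  rw [hstart]
  -- archimedean bound
  have hA : (∏ w : InfinitePlace K, (⨆ i, w (x i)) ^ w.mult)
      ≤ ((∏ w : InfinitePlace K, Gw n β ψ w ^ w.mult : ℝ≥0) : ℝ) := by
    rw [NNReal.coe_prod]
    refine Finset.prod_le_prod (fun w _ => ?_) (fun w _ => ?_)
    · exact pow_nonneg (le_trans zero_le_one (arch_one_le_sup n β ψ w)) _
    · rw [NNReal.coe_pow]
      exact pow_le_pow_left₀ (le_trans zero_le_one (arch_one_le_sup n β ψ w))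
        (arch_sup_le n β ψ w) _
  -- nonarchimedean bound
  set Sv : HeightOneSpectrum (𝓞 K) → ℝ≥0 :=
    fun v => Real.toNNReal (⨆ i, vAbs v (x i)) with hSvdef
  have hSv : ∀ v, (⨆ i, vAbs v (x i)) = ((Sv v : ℝ≥0) : ℝ) := fun v =>
    (Real.coe_toNNReal _ (le_trans zero_le_one (nonarch_one_le_sup n β ψ v))).symm
  have hSv1 : ∀ v, 1 ≤ Sv v := fun v => by
    rw [← NNReal.coe_le_coe, ← hSv v, NNReal.coe_one]
    exact nonarch_one_le_sup n β ψ v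
  have hSvle : ∀ v, Sv v ≤ Gv n β ψ v := fun v => by
    rw [← NNReal.coe_le_coe, ← hSv v]
    exact nonarch_sup_le n β ψ v
  have hBeq : (∏ᶠ v : HeightOneSpectrum (𝓞 K), ⨆ i, vAbs v (x i))
      = ((∏ᶠ v, Sv v : ℝ≥0) : ℝ) := by
    rw [coe_finprod]
    exact finprod_congr hSv
  have hB : (∏ᶠ v : HeightOneSpectrum (𝓞 K), ⨆ i, vAbs v (x i))
      ≤ ((∏ᶠ v, Gv n β ψ v : ℝ≥0) : ℝ) := by
    rw [hBeq, NNReal.coe_le_coe]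
    exact finprod_le_finprod_nn _ _ hSv1 hSvle (Gv_finite n β ψ)
  have hB0 : (0 : ℝ) ≤ ∏ᶠ v : HeightOneSpectrum (𝓞 K), ⨆ i, vAbs v (x i) := by
    rw [hBeq]; exact NNReal.coe_nonneg _
  -- combine
  have hmain : (∏ w : InfinitePlace K, (⨆ i, w (x i)) ^ w.mult) *
      (∏ᶠ v : HeightOneSpectrum (𝓞 K), ⨆ i, vAbs v (x i)) ≤
      (((∏ w : InfinitePlace K, Gw n β ψ w ^ w.mult) * ∏ᶠ v, Gv n β ψ v : ℝ≥0) : ℝ) := by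
    rw [NNReal.coe_mul]
    exact mul_le_mul hA hB hB0 (NNReal.coe_nonneg _)
  have hTT : (∏ w : InfinitePlace K, Gw n β ψ w ^ w.mult) * (∏ᶠ v, Gv n β ψ v : ℝ≥0) =
      (((n : ℝ≥0) + 1) * 2 ^ n) ^ D * (∏ i, PAn (β i) * PNn (β i)) *
        (∏ p : Fin 2 × Fin 2, PAn (ψ p.1 p.2) * PNn (ψ p.1 p.2)) ^ n := by
    rw [prod_Gw, finprod_Gv, Finset.prod_mul_distrib, Finset.prod_mul_distrib, mul_pow]
    ring
  rw [hTT] at hmain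
  refine le_trans (Real.rpow_le_rpow (by
    refine mul_nonneg (Finset.prod_nonneg fun w _ => pow_nonneg
      (le_trans zero_le_one (arch_one_le_sup n β ψ w)) _) hB0) hmain hE0) ?_
  -- now compute the right-hand side
  have hcast : ((((((n : ℝ≥0) + 1) * 2 ^ n) ^ D * (∏ i, PAn (β i) * PNn (β i)) *
      (∏ p : Fin 2 × Fin 2, PAn (ψ p.1 p.2) * PNn (ψ p.1 p.2)) ^ n : ℝ≥0)) : ℝ) =
      (((n : ℝ) + 1) * 2 ^ n) ^ D * (∏ i, ((PAn (β i) * PNn (β i) : ℝ≥0) : ℝ)) *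
        (∏ p : Fin 2 × Fin 2, ((PAn (ψ p.1 p.2) * PNn (ψ p.1 p.2) : ℝ≥0) : ℝ)) ^ n := by
    push_cast
    ring
  rw [hcast]
  have hQ0 : (0 : ℝ) ≤ ∏ p : Fin 2 × Fin 2, ((PAn (ψ p.1 p.2) * PNn (ψ p.1 p.2) : ℝ≥0) : ℝ) :=
    Finset.prod_nonneg fun p _ => NNReal.coe_nonneg _
  have hsplit : ((((n : ℝ) + 1) * 2 ^ n) ^ D * (∏ i, ((PAn (β i) * PNn (β i) : ℝ≥0) : ℝ)) *
      (∏ p : Fin 2 × Fin 2, ((PAn (ψ p.1 p.2) * PNn (ψ p.1 p.2) : ℝ≥0) : ℝ)) ^ n) ^ E =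
      ((((n : ℝ) + 1) * 2 ^ n) ^ D) ^ E * (∏ i, ((PAn (β i) * PNn (β i) : ℝ≥0) : ℝ)) ^ E *
        ((∏ p : Fin 2 × Fin 2, ((PAn (ψ p.1 p.2) * PNn (ψ p.1 p.2) : ℝ≥0) : ℝ)) ^ n) ^ E := by
    exact rpow_mul3 _ _ _ E (by positivity)
      (Finset.prod_nonneg fun i _ => NNReal.coe_nonneg _) (by positivity)
  rw [hsplit]
  have h1 : ((((n : ℝ) + 1) * 2 ^ n) ^ D) ^ E = ((n : ℝ) + 1) * 2 ^ n := by
    rw [← Real.rpow_natCast (((n : ℝ) + 1) * 2 ^ n) D, ← Real.rpow_mul (by positivity),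
        mul_inv_cancel₀ (by exact_mod_cast hD0.ne'), Real.rpow_one]
  have h2 : (∏ i, ((PAn (β i) * PNn (β i) : ℝ≥0) : ℝ)) ^ E = ∏ i, mulHeight₁ (β i) := by
    rw [← Real.finset_prod_rpow _ _ (fun i _ => NNReal.coe_nonneg _) E]
    exact Finset.prod_congr rfl fun i _ => (PBAux.mulHeight₁_eq (β i)).symm
  have h3 : ((∏ p : Fin 2 × Fin 2, ((PAn (ψ p.1 p.2) * PNn (ψ p.1 p.2) : ℝ≥0) : ℝ)) ^ n) ^ E =
      (∏ p : Fin 2 × Fin 2, mulHeight₁ (ψ p.1 p.2)) ^ n := by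
    rw [← Real.rpow_natCast (∏ p : Fin 2 × Fin 2,
          ((PAn (ψ p.1 p.2) * PNn (ψ p.1 p.2) : ℝ≥0) : ℝ)) n,
        ← Real.rpow_mul hQ0, mul_comm, Real.rpow_mul hQ0, Real.rpow_natCast]
    congr 1
    rw [← Real.finset_prod_rpow _ _ (fun p _ => NNReal.coe_nonneg _) E]
    exact Finset.prod_congr rfl fun p _ => (PBAux.mulHeight₁_eq (ψ p.1 p.2)).symm
  rw [h1, h2, h3]
  -- final numeric estimates
  have hH0_1 : (1 : ℝ) ≤ H₀ := le_trans (one_le_mulHeight₁ (ψ 0 0)) (hH 0 0)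
  have hP1 : (1 : ℝ) ≤ ∏ i, mulHeight₁ (β i) := by
    refine Finset.prod_induction _ (fun y => 1 ≤ y) (fun a b ha hb =>
      le_trans ha (le_mul_of_one_le_right (le_trans zero_le_one ha) hb)) le_rfl fun i _ => one_le_mulHeight₁ (β i)
  have hQle : (∏ p : Fin 2 × Fin 2, mulHeight₁ (ψ p.1 p.2)) ≤ H₀ ^ 4 := by
    have : (∏ p : Fin 2 × Fin 2, mulHeight₁ (ψ p.1 p.2)) ≤ ∏ _p : Fin 2 × Fin 2, H₀ :=
      Finset.prod_le_prod (fun p _ => le_trans zero_le_one (one_le_mulHeight₁ _))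
        (fun p _ => hH p.1 p.2)
    refine le_trans this ?_
    rw [Finset.prod_const, Finset.card_univ]
    simp
  have hQn : (∏ p : Fin 2 × Fin 2, mulHeight₁ (ψ p.1 p.2)) ^ n ≤ H₀ ^ (2 * n * (n + 1)) := by
    have h4 : ((∏ p : Fin 2 × Fin 2, mulHeight₁ (ψ p.1 p.2)) ^ n) ≤ (H₀ ^ 4) ^ n :=
      pow_le_pow_left₀ (Finset.prod_nonneg fun p _ =>
        le_trans zero_le_one (one_le_mulHeight₁ _)) hQle n
    refine le_trans h4 ?_
    rw [← pow_mul]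
    exact pow_le_pow_right₀ hH0_1 (by nlinarith)
  have h2n : (2 : ℝ) ^ n ≤ 2 ^ (3 * n * (n + 1)) :=
    pow_le_pow_right₀ one_le_two (by nlinarith)
  calc ((n : ℝ) + 1) * 2 ^ n * (∏ i, mulHeight₁ (β i)) *
        (∏ p : Fin 2 × Fin 2, mulHeight₁ (ψ p.1 p.2)) ^ n
      = ((n : ℝ) + 1) * 2 ^ n * (∏ p : Fin 2 × Fin 2, mulHeight₁ (ψ p.1 p.2)) ^ n *
        (∏ i, mulHeight₁ (β i)) := by ring
    _ ≤ ((n : ℝ) + 1) * 2 ^ (3 * n * (n + 1)) * H₀ ^ (2 * n * (n + 1)) *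
        (∏ i, mulHeight₁ (β i)) := by
      have hQnn : (0 : ℝ) ≤ (∏ p : Fin 2 × Fin 2, mulHeight₁ (ψ p.1 p.2)) ^ n :=
        pow_nonneg (Finset.prod_nonneg fun p _ =>
          le_trans zero_le_one (one_le_mulHeight₁ _)) n
      have hn1 : (0 : ℝ) ≤ (n : ℝ) + 1 := by positivity
      have hRn : (0 : ℝ) ≤ ((n : ℝ) + 1) * 2 ^ (3 * n * (n + 1)) * H₀ ^ (2 * n * (n + 1)) :=
        mul_nonneg (mul_nonneg hn1 (pow_nonneg zero_le_two _))
          (pow_nonneg (le_trans zero_le_one hH0_1) _)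
      refine mul_le_mul ?_ le_rfl (le_trans zero_le_one hP1) hRn
      rw [mul_assoc, mul_assoc]
      refine mul_le_mul_of_nonneg_left ?_ hn1
      exact mul_le_mul h2n hQn hQnn (pow_nonneg zero_le_two _)
end
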